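/- In the monoid Π_N = ⟨a, b | baa(ba)^N = a⟩ with N ≥ 2, for every k ≥ 1 the equality b^{2k} · a^{2k} · a = a · (ba)^{s'_N(k) − 1} holds, where s'_N(0) = 1 and s'_N(n) = N²·s'_N(n−1) − N + 1. -/

import Mathlib

inductive AB : Type
  | a : AB
  | b : AB

/-- The generator `a` as a word in the free monoid on `{a, b}`. -/
def wa : FreeMonoid AB := FreeMonoid.of AB.a

/-- The generator `b` as a word in the free monoid on `{a, b}`. -/
def wb : FreeMonoid AB := FreeMonoid.of AB.b

/-- The single defining relation `baa(ba)^N = a` of `Π_N`. -/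
def piRel (N : ℕ) : FreeMonoid AB → FreeMonoid AB → Prop :=
  fun x y => x = wb * wa * wa * (wb * wa) ^ N ∧ y = wa

/-- Equality in `Π_N`, i.e. the congruence on the free monoid generated by the relation. -/
def piEq (N : ℕ) : FreeMonoid AB → FreeMonoid AB → Prop :=
  fun u v => conGen (piRel N) u v

def sN' (N : ℕ) : ℕ → ℕ
  | 0 => 1
  | n+1 => N^2 * sN' N n - N + 1

lemma pe_of (N : ℕ) : piEq N (wb * wa * wa * (wb * wa) ^ N) wa :=
  ConGen.Rel.of _ _ ⟨rfl, rfl⟩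

lemma pe_refl (N : ℕ) (u : FreeMonoid AB) : piEq N u u := (conGen (piRel N)).refl u
lemma pe_symm {N : ℕ} {u v} (h : piEq N u v) : piEq N v u := (conGen (piRel N)).symm h
lemma pe_trans {N : ℕ} {u v w} (h1 : piEq N u v) (h2 : piEq N v w) : piEq N u w :=
  (conGen (piRel N)).trans h1 h2
lemma pe_mul {N : ℕ} {u v w x} (h1 : piEq N u w) (h2 : piEq N v x) : piEq N (u*v) (w*x) :=
  (conGen (piRel N)).mul h1 h2

/-- `a ~ t^j a t^{jN}` where `t = ba`. -/
lemma pe_expand (N j : ℕ) :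
    piEq N wa ((wb*wa)^j * wa * (wb*wa)^(j*N)) := by
  induction j with
  | zero => simpa using pe_refl N wa
  | succ j ih =>
    have h1 : piEq N wa ((wb*wa) * wa * (wb*wa)^N) := pe_symm (pe_of N)
    have h2 : piEq N ((wb*wa) * wa * (wb*wa)^N)
        ((wb*wa) * ((wb*wa)^j * wa * (wb*wa)^(j*N)) * (wb*wa)^N) :=
      pe_mul (pe_mul (pe_refl N _) ih) (pe_refl N _)
    have heq : (wb*wa) * ((wb*wa)^j * wa * (wb*wa)^(j*N)) * (wb*wa)^N
        = (wb*wa)^(j+1) * wa * (wb*wa)^((j+1)*N) := by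
      rw [show (j+1)*N = j*N + N by ring]
      simp [pow_add, pow_succ', mul_assoc]
    rw [heq] at h2
    exact pe_trans h1 h2

/-- `t^m a t^{mN+j} ~ a t^j`. -/
lemma pe_absorb (N m : ℕ) : ∀ j, piEq N ((wb*wa)^m * wa * (wb*wa)^(m*N + j)) (wa * (wb*wa)^j) := by
  induction m with
  | zero => intro j; simpa using pe_refl N (wa * (wb*wa)^j)
  | succ m ih =>
    intro j
    have h1 : piEq N ((wb*wa) * ((wb*wa)^m * wa * (wb*wa)^(m*N + (N + j))))
        ((wb*wa) * (wa * (wb*wa)^(N+j))) := pe_mul (pe_refl N _) (ih (N+j))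
    have heq1 : (wb*wa)^(m+1) * wa * (wb*wa)^((m+1)*N + j)
        = (wb*wa) * ((wb*wa)^m * wa * (wb*wa)^(m*N + (N + j))) := by
      rw [show (m+1)*N + j = m*N + (N + j) by ring]
      simp [pow_add, pow_succ', mul_assoc]
    have heq2 : (wb*wa) * (wa * (wb*wa)^(N+j))
        = (wb*wa*wa*(wb*wa)^N) * (wb*wa)^j := by
      simp [pow_add, mul_assoc]
    have h4 : piEq N ((wb*wa) * (wa * (wb*wa)^(N+j))) (wa * (wb*wa)^j) := by
      rw [heq2]; exact pe_mul (pe_of N) (pe_refl N _)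
    rw [heq1]
    exact pe_trans h1 h4

/-- `b t^m a a ~ a t^{mN² - N}` for `m ≥ 1`, `N ≥ 1`. -/
lemma pe_key (N m : ℕ) (hN : 1 ≤ N) (hm : 1 ≤ m) :
    piEq N (wb * (wb*wa)^m * wa * wa) (wa * (wb*wa)^(N^2*m - N)) := by
  have hle : N ≤ m * N * N := by
    calc N ≤ 1 * N * N := by nlinarith
    _ ≤ m * N * N := by
      apply Nat.mul_le_mul_right; apply Nat.mul_le_mul_right; exact hm
  have h1 : piEq N (wb * (wb*wa)^m * wa * wa)
      (wb * (wb*wa)^m * wa * ((wb*wa)^(m*N) * wa * (wb*wa)^(m*N*N))) :=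
    pe_mul (pe_refl N _) (pe_expand N (m*N))
  have h2 : piEq N (wb * ((wb*wa)^m * wa * (wb*wa)^(m*N)) * (wa * (wb*wa)^(m*N*N)))
      (wb * wa * (wa * (wb*wa)^(m*N*N))) := by
    refine pe_mul (pe_mul (pe_refl N wb) ?_) (pe_refl N _)
    simpa using pe_absorb N m 0
  have heq1 : wb * (wb*wa)^m * wa * ((wb*wa)^(m*N) * wa * (wb*wa)^(m*N*N))
      = wb * ((wb*wa)^m * wa * (wb*wa)^(m*N)) * (wa * (wb*wa)^(m*N*N)) := by
    simp [mul_assoc]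
  have heq2 : wb * wa * (wa * (wb*wa)^(m*N*N))
      = (wb*wa*wa*(wb*wa)^N) * (wb*wa)^(m*N*N - N) := by
    rw [show m*N*N = N + (m*N*N - N) by omega]
    simp [pow_add, mul_assoc]
  have h3 : piEq N ((wb*wa*wa*(wb*wa)^N) * (wb*wa)^(m*N*N - N))
      (wa * (wb*wa)^(m*N*N - N)) := pe_mul (pe_of N) (pe_refl N _)
  have h : piEq N (wb * (wb*wa)^m * wa * wa) (wa * (wb*wa)^(m*N*N - N)) :=
    pe_trans h1 (by rw [heq1]; exact pe_trans h2 (by rw [heq2]; exact h3))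
  have hee : N^2*m - N = m*N*N - N := by rw [show N^2*m = m*N*N by ring]
  rw [hee]
  exact h

lemma sN'_pos (N k : ℕ) : 1 ≤ sN' N k := by
  cases k with
  | zero => simp [sN']
  | succ k => simp [sN']

lemma pe_main (N : ℕ) (hN : 1 ≤ N) :
    ∀ k, piEq N (wb ^ (2 * k) * wa ^ (2 * k) * wa) (wa * (wb * wa) ^ (sN' N k - 1)) := by
  intro k
  induction k with
  | zero => simpa [sN'] using pe_refl N wa
  | succ k ih =>
    set s := sN' N k with hsdef
    have hs : 1 ≤ s := sN'_pos N k
    have hb : wb^(2*(k+1)) = wb*wb*wb^(2*k) := by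
      rw [show 2*(k+1) = 1+(1+2*k) by ring, pow_add, pow_add, pow_one]
      simp [mul_assoc]
    have ha : wa^(2*(k+1)) = wa^(2*k)*(wa*wa) := by
      rw [show 2*(k+1) = 2*k+2 by ring, pow_add, pow_two]
    have heq1 : wb^(2*(k+1)) * wa^(2*(k+1)) * wa
        = wb*wb*(wb^(2*k) * wa^(2*k) * wa)*(wa*wa) := by
      rw [hb, ha]; simp [mul_assoc]
    have h1 : piEq N (wb*wb*(wb^(2*k) * wa^(2*k) * wa)*(wa*wa))
        (wb*wb*(wa * (wb*wa)^(s-1))*(wa*wa)) :=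
      pe_mul (pe_mul (pe_refl N _) ih) (pe_refl N _)
    have heq2 : wb*wb*(wa * (wb*wa)^(s-1))*(wa*wa) = wb * (wb*wa)^s * wa * wa := by
      rw [show s = 1 + (s-1) by omega, pow_add, pow_one]
      simp [mul_assoc]
    have h2 : piEq N (wb * (wb*wa)^s * wa * wa) (wa * (wb*wa)^(N^2*s - N)) :=
      pe_key N s hN hs
    have hse : sN' N (k+1) - 1 = N^2*s - N := by simp [sN', hsdef]
    rw [heq1, hse]
    exact pe_trans h1 (heq2 ▸ h2)

theorem stmt_13 (N : ℕ) (hN : 2 ≤ N) (k : ℕ) (hk : 1 ≤ k) :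
    piEq N (wb ^ (2 * k) * wa ^ (2 * k) * wa) (wa * (wb * wa) ^ (sN' N k - 1)) :=
  pe_main N (by omega) k
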